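/- The switched Markov jump linear system (𝒢,Π,Ψ) is uniformly exponentially mean square stable if and only if there exist M ∈ ℕ₀ and a function X assigning to each (i,(r_1,…,r_M)) ∈ 𝒩 × Ψ_M a symmetric positive definite n×n real matrix X(i,r_1,…,r_M) such that A(i)ᵀ (Σ_{j=1}^{N} π_{ij}(r_1) X(j,r_2,…,r_{M+1})) A(i) − X(i,r_1,…,r_M) is negative definite for every (r_1,…,r_{M+1}) ∈ Ψ_{M+1} and every i ∈ 𝒩. -/

import Mathlib

open Matrix
open scoped Classical

noncomputable section

namespace SMJLS

/-- The ordered product `Φ = A(t(d−1)) ⋯ A(t 1) A(t 0)` along a tuple of modes. -/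
def pathProd {n N : ℕ} (Am : Fin N → Matrix (Fin n) (Fin n) ℝ) {d : ℕ}
    (t : Fin d → Fin N) : Matrix (Fin n) (Fin n) ℝ :=
  (((List.finRange d).reverse).map fun l => Am (t l)).prod

/-- `Gmat Am Pm ψ i j k` is `E[Φ(k,j)ᵀ Φ(k,j) ∣ θ(j) = i]`, written as the explicit sum over
tuples `(i_j, …, i_{k−1}) ∈ 𝒩^{k−j}` with `i_j = i` of
`(∏_{l=j+1}^{k−1} π_{i_{l−1} i_l}(ψ(l))) • ΦᵀΦ` where `Φ = A(i_{k−1}) ⋯ A(i_j)`;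
by convention it is `I` when `k = j`. -/
def Gmat {n N J : ℕ} (Am : Fin N → Matrix (Fin n) (Fin n) ℝ)
    (Pm : Fin J → Matrix (Fin N) (Fin N) ℝ) (ψ : ℕ → Fin J) (i : Fin N) (j k : ℕ) :
    Matrix (Fin n) (Fin n) ℝ :=
  if k ≤ j then 1
  else
    ∑ t : Fin (k - j - 1 + 1) → Fin N,
      (if t 0 = i then
          ∏ l : Fin (k - j - 1), Pm (ψ (j + (l : ℕ) + 1)) (t l.castSucc) (t l.succ)
        else 0) • ((pathProd Am t)ᵀ * pathProd Am t)

/-- Exponential mean square stability (of a single switching sequence) with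
explicit constants `c` and `lam`:  `G_ψ(i,j,k) ≤ c λ^(k−j) I` in the Loewner order. -/
def EMSSWith {n N J : ℕ} (Am : Fin N → Matrix (Fin n) (Fin n) ℝ)
    (Pm : Fin J → Matrix (Fin N) (Fin N) ℝ) (c lam : ℝ) (ψ : ℕ → Fin J) : Prop :=
  ∀ (i : Fin N) (j k : ℕ), j ≤ k →
    ((c * lam ^ (k - j)) • (1 : Matrix (Fin n) (Fin n) ℝ) - Gmat Am Pm ψ i j k).PosSemidef

/-- Uniform exponential mean square stability of the switched Markov jump linear system. -/
def UEMSS {n N J : ℕ} (Am : Fin N → Matrix (Fin n) (Fin n) ℝ)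
    (Pm : Fin J → Matrix (Fin N) (Fin N) ℝ) (Ψ : Set (ℕ → Fin J)) : Prop :=
  ∃ c lam : ℝ, 1 ≤ c ∧ 0 ≤ lam ∧ lam < 1 ∧ ∀ ψ ∈ Ψ, EMSSWith Am Pm c lam ψ

/-- Probability of the cylinder `{θ(0) = path 0, …, θ(k) = path k}`. -/
def weight {N J : ℕ} (Pm : Fin J → Matrix (Fin N) (Fin N) ℝ) (ψ : ℕ → Fin J)
    (p0 : Fin N → ℝ) (k : ℕ) (path : Fin (k + 1) → Fin N) : ℝ :=
  p0 (path 0) * ∏ l : Fin k, Pm (ψ ((l : ℕ) + 1)) (path l.castSucc) (path l.succ)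

/-- Expectation of a functional `g` of the chain which depends only on `θ(0), …, θ(k)`. -/
def pexp {N J : ℕ} (Pm : Fin J → Matrix (Fin N) (Fin N) ℝ) (ψ : ℕ → Fin J)
    (p0 : Fin N → ℝ) (k : ℕ) (g : (ℕ → Fin N) → ℝ) : ℝ :=
  ∑ path : Fin (k + 1) → Fin N,
    weight Pm ψ p0 k path *
      g (fun l => path ⟨min l k, Nat.lt_succ_of_le (min_le_right l k)⟩)

/-- A disturbance process is adapted when `w(k)` is measurable with respect to
`σ(θ(0),…,θ(k))`, i.e. `w(k)` is a function of the first `k+1` modes. -/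
def Adapted {N m : ℕ} (w : ℕ → (ℕ → Fin N) → Fin m → ℝ) : Prop :=
  ∀ (k : ℕ) (ω ω' : ℕ → Fin N), (∀ l, l ≤ k → ω l = ω' l) → w k ω = w k ω'

/-- State trajectory: `x(k+1) = A(θ(k)) x(k) + B(θ(k)) w(k)`, `x(0) = x0`. -/
def traj {n m N : ℕ} (Am : Fin N → Matrix (Fin n) (Fin n) ℝ)
    (Bm : Fin N → Matrix (Fin n) (Fin m) ℝ) (x0 : (ℕ → Fin N) → Fin n → ℝ)
    (w : ℕ → (ℕ → Fin N) → Fin m → ℝ) : ℕ → (ℕ → Fin N) → Fin n → ℝ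
  | 0, ω => x0 ω
  | k + 1, ω => (Am (ω k)).mulVec (traj Am Bm x0 w k ω) + (Bm (ω k)).mulVec (w k ω)

/-- Error trajectory: `z(k) = C(θ(k)) x(k) + D(θ(k)) w(k)`. -/
def errv {n m p N : ℕ} (Am : Fin N → Matrix (Fin n) (Fin n) ℝ)
    (Bm : Fin N → Matrix (Fin n) (Fin m) ℝ) (Cm : Fin N → Matrix (Fin p) (Fin n) ℝ)
    (Dm : Fin N → Matrix (Fin p) (Fin m) ℝ) (x0 : (ℕ → Fin N) → Fin n → ℝ)
    (w : ℕ → (ℕ → Fin N) → Fin m → ℝ) (k : ℕ) (ω : ℕ → Fin N) : Fin p → ℝ :=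
  (Cm (ω k)).mulVec (traj Am Bm x0 w k ω) + (Dm (ω k)).mulVec (w k ω)

/-- `E[‖v(k)‖²]` for an adapted process `v`. -/
def energy {N J d : ℕ} (Pm : Fin J → Matrix (Fin N) (Fin N) ℝ) (ψ : ℕ → Fin J)
    (p0 : Fin N → ℝ) (v : ℕ → (ℕ → Fin N) → Fin d → ℝ) (k : ℕ) : ℝ :=
  pexp Pm ψ p0 k (fun ω => v k ω ⬝ᵥ v k ω)

/-- Mean square strict contractiveness with constant `γ` for the single switching
sequence `ψ` : whenever `x(0) = 0`, `‖z‖_{2,e} ≤ γ ‖w‖_{2,e}` for every admissible `w`. -/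
def ContractiveWith {n m p N J : ℕ} (Am : Fin N → Matrix (Fin n) (Fin n) ℝ)
    (Bm : Fin N → Matrix (Fin n) (Fin m) ℝ) (Cm : Fin N → Matrix (Fin p) (Fin n) ℝ)
    (Dm : Fin N → Matrix (Fin p) (Fin m) ℝ) (Pm : Fin J → Matrix (Fin N) (Fin N) ℝ)
    (γ : ℝ) (ψ : ℕ → Fin J) (p0 : Fin N → ℝ) : Prop :=
  ∀ w : ℕ → (ℕ → Fin N) → Fin m → ℝ, Adapted w →
    Summable (fun k => energy Pm ψ p0 w k) →
    Summable (fun k => energy Pm ψ p0 (errv Am Bm Cm Dm (fun _ => 0) w) k) ∧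
      ∑' k, energy Pm ψ p0 (errv Am Bm Cm Dm (fun _ => 0) w) k ≤
        γ ^ 2 * ∑' k, energy Pm ψ p0 w k

/-- Uniform mean square strict contractiveness of the switched system. -/
def UMSSC {n m p N J : ℕ} (Am : Fin N → Matrix (Fin n) (Fin n) ℝ)
    (Bm : Fin N → Matrix (Fin n) (Fin m) ℝ) (Cm : Fin N → Matrix (Fin p) (Fin n) ℝ)
    (Dm : Fin N → Matrix (Fin p) (Fin m) ℝ) (Pm : Fin J → Matrix (Fin N) (Fin N) ℝ)
    (Ψ : Set (ℕ → Fin J)) (p0 : Fin N → ℝ) : Prop :=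
  ∃ γ : ℝ, 0 < γ ∧ γ < 1 ∧ ∀ ψ ∈ Ψ, ContractiveWith Am Bm Cm Dm Pm γ ψ p0

/-- Marginal distribution `p(k) = p(0) Π(ψ(1)) ⋯ Π(ψ(k))` of the chain. -/
def pdist {N J : ℕ} (Pm : Fin J → Matrix (Fin N) (Fin N) ℝ) (ψ : ℕ → Fin J)
    (p0 : Fin N → ℝ) : ℕ → Fin N → ℝ
  | 0 => p0
  | k + 1 => Matrix.vecMul (pdist Pm ψ p0 k) (Pm (ψ (k + 1)))

/-- `ℒ(i,X) = A(i)ᵀ X A(i) + C(i)ᵀ C(i)`. -/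
def opL {n p N : ℕ} (Am : Fin N → Matrix (Fin n) (Fin n) ℝ)
    (Cm : Fin N → Matrix (Fin p) (Fin n) ℝ) (i : Fin N) (X : Matrix (Fin n) (Fin n) ℝ) :
    Matrix (Fin n) (Fin n) ℝ :=
  (Am i)ᵀ * X * Am i + (Cm i)ᵀ * Cm i

/-- `ℛ(i,X) = B(i)ᵀ X A(i) + D(i)ᵀ C(i)`. -/
def opR {n m p N : ℕ} (Am : Fin N → Matrix (Fin n) (Fin n) ℝ)
    (Bm : Fin N → Matrix (Fin n) (Fin m) ℝ) (Cm : Fin N → Matrix (Fin p) (Fin n) ℝ)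
    (Dm : Fin N → Matrix (Fin p) (Fin m) ℝ) (i : Fin N) (X : Matrix (Fin n) (Fin n) ℝ) :
    Matrix (Fin m) (Fin n) ℝ :=
  (Bm i)ᵀ * X * Am i + (Dm i)ᵀ * Cm i

/-- `𝒲(i,X) = I − B(i)ᵀ X B(i) − D(i)ᵀ D(i)`. -/
def opW {n m p N : ℕ} (Bm : Fin N → Matrix (Fin n) (Fin m) ℝ)
    (Dm : Fin N → Matrix (Fin p) (Fin m) ℝ) (i : Fin N) (X : Matrix (Fin n) (Fin n) ℝ) :
    Matrix (Fin m) (Fin m) ℝ :=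
  1 - (Bm i)ᵀ * X * Bm i - (Dm i)ᵀ * Dm i

/-- `𝒮(i,X) = ℒ(i,X) + ℛ(i,X)ᵀ 𝒲(i,X)⁻¹ ℛ(i,X)`. -/
def opS {n m p N : ℕ} (Am : Fin N → Matrix (Fin n) (Fin n) ℝ)
    (Bm : Fin N → Matrix (Fin n) (Fin m) ℝ) (Cm : Fin N → Matrix (Fin p) (Fin n) ℝ)
    (Dm : Fin N → Matrix (Fin p) (Fin m) ℝ) (i : Fin N) (X : Matrix (Fin n) (Fin n) ℝ) :
    Matrix (Fin n) (Fin n) ℝ :=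
  opL Am Cm i X + (opR Am Bm Cm Dm i X)ᵀ * (opW Bm Dm i X)⁻¹ * opR Am Bm Cm Dm i X

/-- `ℱ(i,X) = A(i) + B(i) 𝒲(i,X)⁻¹ ℛ(i,X)`. -/
def opF {n m p N : ℕ} (Am : Fin N → Matrix (Fin n) (Fin n) ℝ)
    (Bm : Fin N → Matrix (Fin n) (Fin m) ℝ) (Cm : Fin N → Matrix (Fin p) (Fin n) ℝ)
    (Dm : Fin N → Matrix (Fin p) (Fin m) ℝ) (i : Fin N) (X : Matrix (Fin n) (Fin n) ℝ) :
    Matrix (Fin n) (Fin n) ℝ :=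
  Am i + Bm i * (opW Bm Dm i X)⁻¹ * opR Am Bm Cm Dm i X

/-- Backwards recursion for the perturbed finite-horizon Riccati difference equation,
indexed by the number `d = T + 1 − k` of remaining steps. -/
def ricAuxE {n m p N J : ℕ} (Am : Fin N → Matrix (Fin n) (Fin n) ℝ)
    (Bm : Fin N → Matrix (Fin n) (Fin m) ℝ) (Cm : Fin N → Matrix (Fin p) (Fin n) ℝ)
    (Dm : Fin N → Matrix (Fin p) (Fin m) ℝ) (Pm : Fin J → Matrix (Fin N) (Fin N) ℝ)
    (ψ : ℕ → Fin J) (T : ℕ) (ε : ℝ) : ℕ → Fin N → Matrix (Fin n) (Fin n) ℝ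
  | 0, _ => 0
  | d + 1, i =>
      opS Am Bm Cm Dm i
          (∑ j, Pm (ψ (T - d + 1)) i j • ricAuxE Am Bm Cm Dm Pm ψ T ε d j) + ε • 1

/-- The perturbed finite-horizon Riccati solution `X_ψ(i,k,T,ε)`:
`X_ψ(i,T+1,T,ε) = 0` and `X_ψ(i,k,T,ε) = 𝒮(i, X̃_ψ(i,k+1,T,ε)) + εI` where
`X̃_ψ(i,k+1,T,ε) = Σ_j π_{ij}(ψ(k+1)) X_ψ(j,k+1,T,ε)`. -/
def ricE {n m p N J : ℕ} (Am : Fin N → Matrix (Fin n) (Fin n) ℝ)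
    (Bm : Fin N → Matrix (Fin n) (Fin m) ℝ) (Cm : Fin N → Matrix (Fin p) (Fin n) ℝ)
    (Dm : Fin N → Matrix (Fin p) (Fin m) ℝ) (Pm : Fin J → Matrix (Fin N) (Fin N) ℝ)
    (ψ : ℕ → Fin J) (i : Fin N) (k T : ℕ) (ε : ℝ) : Matrix (Fin n) (Fin n) ℝ :=
  ricAuxE Am Bm Cm Dm Pm ψ T ε (T + 1 - k) i

/-- The (unperturbed) finite-horizon Riccati solution `X_ψ(i,k,T)`. -/
def ric {n m p N J : ℕ} (Am : Fin N → Matrix (Fin n) (Fin n) ℝ)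
    (Bm : Fin N → Matrix (Fin n) (Fin m) ℝ) (Cm : Fin N → Matrix (Fin p) (Fin n) ℝ)
    (Dm : Fin N → Matrix (Fin p) (Fin m) ℝ) (Pm : Fin J → Matrix (Fin N) (Fin N) ℝ)
    (ψ : ℕ → Fin J) (i : Fin N) (k T : ℕ) : Matrix (Fin n) (Fin n) ℝ :=
  ricE Am Bm Cm Dm Pm ψ i k T 0

/-- `ℬ(i,X,Y) = [[A,B],[C,D]]ᵀ diag(X,I) [[A,B],[C,D]] − diag(Y,I)`. -/
def bigB {n m p N : ℕ} (Am : Fin N → Matrix (Fin n) (Fin n) ℝ)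
    (Bm : Fin N → Matrix (Fin n) (Fin m) ℝ) (Cm : Fin N → Matrix (Fin p) (Fin n) ℝ)
    (Dm : Fin N → Matrix (Fin p) (Fin m) ℝ) (i : Fin N)
    (X Y : Matrix (Fin n) (Fin n) ℝ) : Matrix (Fin n ⊕ Fin m) (Fin n ⊕ Fin m) ℝ :=
  (Matrix.fromBlocks (Am i) (Bm i) (Cm i) (Dm i))ᵀ *
      Matrix.fromBlocks X 0 0 (1 : Matrix (Fin p) (Fin p) ℝ) *
      Matrix.fromBlocks (Am i) (Bm i) (Cm i) (Dm i) -
    Matrix.fromBlocks Y 0 0 (1 : Matrix (Fin m) (Fin m) ℝ)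

/-- The switching window `ψ_M(k) = (ψ(k+1), …, ψ(k+M))`. -/
def window {J : ℕ} (ψ : ℕ → Fin J) (M k : ℕ) : Fin M → Fin J :=
  fun l => ψ (k + (l : ℕ) + 1)

/-- `Ψ_M`, the set of all windows of length `M` occurring in `Ψ`. -/
def windowSet {J : ℕ} (Ψ : Set (ℕ → Fin J)) (M : ℕ) : Set (Fin M → Fin J) :=
  { r | ∃ ψ ∈ Ψ, ∃ t : ℕ, r = window ψ M t }

/-- Closed-loop matrix `ℱ(i, X̃_ψ(i, l+1, T, ε))` at time `l`. -/
def Fcl {n m p N J : ℕ} (Am : Fin N → Matrix (Fin n) (Fin n) ℝ)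
    (Bm : Fin N → Matrix (Fin n) (Fin m) ℝ) (Cm : Fin N → Matrix (Fin p) (Fin n) ℝ)
    (Dm : Fin N → Matrix (Fin p) (Fin m) ℝ) (Pm : Fin J → Matrix (Fin N) (Fin N) ℝ)
    (ψ : ℕ → Fin J) (T : ℕ) (ε : ℝ) (i : Fin N) (l : ℕ) : Matrix (Fin n) (Fin n) ℝ :=
  opF Am Bm Cm Dm i (∑ j, Pm (ψ (l + 1)) i j • ricE Am Bm Cm Dm Pm ψ j (l + 1) T ε)

/-- Ordered closed-loop product `φ = F(t(d−1), j+d−1) ⋯ F(t 0, j)`. -/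
def clPathProd {n N : ℕ} (F : Fin N → ℕ → Matrix (Fin n) (Fin n) ℝ) (j : ℕ) {d : ℕ}
    (t : Fin d → Fin N) : Matrix (Fin n) (Fin n) ℝ :=
  (((List.finRange d).reverse).map fun l => F (t l) (j + (l : ℕ))).prod

/-- Closed-loop conditional second moment `H_ψ(i,j,k,T,ε)`. -/
def Hmat {n m p N J : ℕ} (Am : Fin N → Matrix (Fin n) (Fin n) ℝ)
    (Bm : Fin N → Matrix (Fin n) (Fin m) ℝ) (Cm : Fin N → Matrix (Fin p) (Fin n) ℝ)
    (Dm : Fin N → Matrix (Fin p) (Fin m) ℝ) (Pm : Fin J → Matrix (Fin N) (Fin N) ℝ)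
    (ψ : ℕ → Fin J) (T : ℕ) (ε : ℝ) (i : Fin N) (j k : ℕ) :
    Matrix (Fin n) (Fin n) ℝ :=
  if k ≤ j then 1
  else
    ∑ t : Fin (k - j - 1 + 1) → Fin N,
      (if t 0 = i then
          ∏ l : Fin (k - j - 1), Pm (ψ (j + (l : ℕ) + 1)) (t l.castSucc) (t l.succ)
        else 0) •
        ((clPathProd (Fcl Am Bm Cm Dm Pm ψ T ε) j t)ᵀ *
          clPathProd (Fcl Am Bm Cm Dm Pm ψ T ε) j t)

/-- `Y_ψ(i,k) = Σ_{j=k}^{k+M+1} E[Φ(j,k)ᵀΦ(j,k) ∣ θ(k)=i]`. -/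
def Ysum {n N J : ℕ} (Am : Fin N → Matrix (Fin n) (Fin n) ℝ)
    (Pm : Fin J → Matrix (Fin N) (Fin N) ℝ) (ψ : ℕ → Fin J) (M : ℕ) (i : Fin N)
    (k : ℕ) : Matrix (Fin n) (Fin n) ℝ :=
  ∑ j ∈ Finset.range (M + 2), Gmat Am Pm ψ i k (k + j)


section Aux

variable {n N J : ℕ}

/-! ### Basic positive semidefinite lemmas over `ℝ` -/

lemma real_conjTranspose {a b : Type*} (B : Matrix a b ℝ) : Bᴴ = Bᵀ := by
  ext i j
  simp [Matrix.conjTranspose_apply]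

lemma psd_smul {A : Matrix (Fin n) (Fin n) ℝ} (hA : A.PosSemidef) {c : ℝ} (hc : 0 ≤ c) :
    (c • A).PosSemidef := by
  refine Matrix.PosSemidef.of_dotProduct_mulVec_nonneg ?_ fun x => ?_
  · rw [Matrix.IsHermitian, Matrix.conjTranspose_smul, star_trivial, hA.1]
  · rw [Matrix.smul_mulVec, dotProduct_smul, smul_eq_mul]
    exact mul_nonneg hc (hA.dotProduct_mulVec_nonneg x)

lemma psd_sum {ι : Type*} (s : Finset ι) (f : ι → Matrix (Fin n) (Fin n) ℝ)
    (h : ∀ i ∈ s, (f i).PosSemidef) : (∑ i ∈ s, f i).PosSemidef := by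
  classical
  induction s using Finset.induction with
  | empty => simpa using Matrix.PosSemidef.zero
  | insert _ _ hmem ih =>
    rw [Finset.sum_insert hmem]
    exact ((h _ (Finset.mem_insert_self _ _)).add
      (ih fun i hi => h i (Finset.mem_insert_of_mem hi)))

lemma psd_conj {A : Matrix (Fin n) (Fin n) ℝ} (hA : A.PosSemidef)
    (B : Matrix (Fin n) (Fin n) ℝ) : (Bᵀ * A * B).PosSemidef := by
  have := hA.conjTranspose_mul_mul_same B
  rwa [real_conjTranspose] at this

lemma posDef_smul_one {c : ℝ} (hc : 0 < c) :
    (c • (1 : Matrix (Fin n) (Fin n) ℝ)).PosDef := by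
  rw [Matrix.smul_one_eq_diagonal]
  exact Matrix.PosDef.diagonal fun _ => hc

lemma exists_psd_upper (A : Matrix (Fin n) (Fin n) ℝ) (hA : A.IsHermitian) :
    ∃ β : ℝ, 0 ≤ β ∧ (β • (1 : Matrix (Fin n) (Fin n) ℝ) - A).PosSemidef := by
  set β : ℝ := ∑ a, ∑ b, |A a b| with hβ
  refine ⟨β, by positivity, Matrix.PosSemidef.of_dotProduct_mulVec_nonneg ?_ fun x => ?_⟩
  · rw [Matrix.IsHermitian, Matrix.conjTranspose_sub, Matrix.conjTranspose_smul, star_trivial,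
      Matrix.conjTranspose_one, hA]
  · have hxa : ∀ a, x a * x a ≤ dotProduct x x := fun a =>
      Finset.single_le_sum (f := fun c => x c * x c)
        (fun c _ => mul_self_nonneg (x c)) (Finset.mem_univ a)
    have habs : ∀ a b : Fin n, |x a| * |x b| ≤ dotProduct x x := by
      intro a b
      nlinarith [hxa a, hxa b, sq_nonneg (|x a| - |x b|), abs_mul_abs_self (x a),
        abs_mul_abs_self (x b)]
    have hquad : dotProduct x (A.mulVec x) ≤ β * dotProduct x x := by
      have hterm : ∀ a b : Fin n, x a * (A a b * x b) ≤ |A a b| * dotProduct x x := by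
        intro a b
        calc x a * (A a b * x b) ≤ |x a * (A a b * x b)| := le_abs_self _
          _ = |A a b| * (|x a| * |x b|) := by rw [abs_mul, abs_mul]; ring
          _ ≤ |A a b| * dotProduct x x :=
            mul_le_mul_of_nonneg_left (habs a b) (abs_nonneg _)
      calc dotProduct x (A.mulVec x) = ∑ a, ∑ b, x a * (A a b * x b) := by
            simp [dotProduct, Matrix.mulVec, Finset.mul_sum]
        _ ≤ ∑ a : Fin n, ∑ b : Fin n, |A a b| * dotProduct x x := by
            refine Finset.sum_le_sum fun a _ => Finset.sum_le_sum fun b _ => hterm a b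
        _ = β * dotProduct x x := by
            simp only [hβ, Finset.sum_mul]
    have : dotProduct (star x) ((β • (1 : Matrix (Fin n) (Fin n) ℝ) - A).mulVec x)
        = β * dotProduct x x - dotProduct x (A.mulVec x) := by
      rw [star_trivial, Matrix.sub_mulVec, dotProduct_sub, Matrix.smul_mulVec,
        Matrix.one_mulVec, dotProduct_smul, smul_eq_mul]
    rw [this]
    linarith [hquad]

lemma posDef_exists_lower {A : Matrix (Fin n) (Fin n) ℝ} (hA : A.PosDef) :
    ∃ α : ℝ, 0 < α ∧ (A - α • (1 : Matrix (Fin n) (Fin n) ℝ)).PosSemidef := by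
  rcases isEmpty_or_nonempty (Fin n) with hn | hn
  · refine ⟨1, one_pos, Matrix.PosSemidef.of_dotProduct_mulVec_nonneg ?_ fun x => ?_⟩
    · ext i j; exact (hn.false i).elim
    · simp [dotProduct]
  · have hH := hA.1
    set ev : Fin n → ℝ := hH.eigenvalues with hev
    set α : ℝ := Finset.univ.inf' Finset.univ_nonempty ev with hα
    have hαpos : 0 < α := by
      rw [hα, Finset.lt_inf'_iff]
      exact fun i _ => hA.eigenvalues_pos i
    set U : Matrix (Fin n) (Fin n) ℝ := (Matrix.IsHermitian.eigenvectorUnitary hH :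
      Matrix (Fin n) (Fin n) ℝ) with hU
    have hUU : U * star U = 1 :=
      Matrix.mem_unitaryGroup_iff.mp (Matrix.IsHermitian.eigenvectorUnitary hH).2
    have hsp : A = U * Matrix.diagonal (RCLike.ofReal ∘ ev) * star U := hH.spectral_theorem
    have hdiag : Matrix.diagonal (RCLike.ofReal ∘ ev) - α • (1 : Matrix (Fin n) (Fin n) ℝ)
        = Matrix.diagonal (fun i => ev i - α) := by
      rw [Matrix.smul_one_eq_diagonal, Matrix.diagonal_sub]
      rfl
    have hkey : A - α • (1 : Matrix (Fin n) (Fin n) ℝ)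
        = U * Matrix.diagonal (fun i => ev i - α) * star U := by
      rw [← hdiag, Matrix.mul_sub, Matrix.sub_mul, ← hsp]
      congr 1
      rw [mul_smul_comm, smul_mul_assoc, mul_one, hUU]
    have hd : (Matrix.diagonal (fun i => ev i - α)).PosSemidef :=
      Matrix.PosSemidef.diagonal fun i => sub_nonneg.mpr (Finset.inf'_le _ (Finset.mem_univ i))
    refine ⟨α, hαpos, ?_⟩
    rw [hkey, Matrix.star_eq_conjTranspose]
    exact hd.mul_mul_conjTranspose_same U

end Aux

section Comb

variable {n N J : ℕ} (Am : Fin N → Matrix (Fin n) (Fin n) ℝ)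
  (Pm : Fin J → Matrix (Fin N) (Fin N) ℝ)

/-- Backward recursion form of the conditional second moment. -/
def Grec (ψ : ℕ → Fin J) : ℕ → ℕ → Fin N → Matrix (Fin n) (Fin n) ℝ
  | 0, _, _ => 1
  | d + 1, j, i =>
      (Am i)ᵀ * (∑ i', Pm (ψ (j + 1)) i i' • Grec ψ d (j + 1) i') * Am i

/-- Explicit sum form, with the number of steps `d + 1` made explicit. -/
def Esum (ψ : ℕ → Fin J) (d j : ℕ) (i : Fin N) : Matrix (Fin n) (Fin n) ℝ :=
  ∑ t : Fin (d + 1) → Fin N,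
    (if t 0 = i then
        ∏ l : Fin d, Pm (ψ (j + (l : ℕ) + 1)) (t l.castSucc) (t l.succ)
      else 0) • ((pathProd Am t)ᵀ * pathProd Am t)

lemma Gmat_eq_Esum (ψ : ℕ → Fin J) (i : Fin N) {j k : ℕ} (h : j < k) :
    Gmat Am Pm ψ i j k = Esum Am Pm ψ (k - j - 1) j i := by
  rw [Gmat, if_neg (by omega)]
  rfl

lemma pathProd_single (t : Fin 1 → Fin N) : pathProd Am t = Am (t 0) := by
  simp [pathProd, List.finRange_succ]

lemma pathProd_cons {d : ℕ} (x : Fin N) (s : Fin d → Fin N) :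
    pathProd Am (Fin.cons x s) = pathProd Am s * Am x := by
  unfold pathProd
  rw [List.finRange_succ, List.reverse_cons, List.map_append, List.prod_append,
    List.map_reverse, List.map_map, List.map_reverse]
  simp [Function.comp_def, Fin.cons_succ]

lemma Esum_zero (ψ : ℕ → Fin J) (j : ℕ) (i : Fin N) :
    Esum Am Pm ψ 0 j i = (Am i)ᵀ * Am i := by
  unfold Esum
  rw [Finset.sum_eq_single_of_mem (fun _ => i) (Finset.mem_univ _)]
  · simp [pathProd_single]
  · intro t _ ht
    rw [if_neg, zero_smul]
    intro h0
    exact ht (funext fun x => by rw [show x = 0 from Fin.ext (by omega), h0])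

lemma Esum_succ (ψ : ℕ → Fin J) (e j : ℕ) (i : Fin N) :
    Esum Am Pm ψ (e + 1) j i
      = (Am i)ᵀ * (∑ i', Pm (ψ (j + 1)) i i' • Esum Am Pm ψ e (j + 1) i') * Am i := by
  have harg : ∀ l : ℕ, j + (l + 1) + 1 = j + 1 + l + 1 := fun l => by omega
  have hW : ∀ s : Fin (e + 1) → Fin N,
      (∏ l : Fin (e + 1), Pm (ψ (j + (l : ℕ) + 1))
          ((Fin.cons i s : Fin (e + 1 + 1) → Fin N) l.castSucc)
          ((Fin.cons i s : Fin (e + 1 + 1) → Fin N) l.succ))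
        = Pm (ψ (j + 1)) i (s 0) *
            ∏ l : Fin e, Pm (ψ (j + 1 + (l : ℕ) + 1)) (s l.castSucc) (s l.succ) := by
    intro s
    rw [Fin.prod_univ_succ]
    refine congrArg₂ (· * ·) (by simp) (Finset.prod_congr rfl fun l _ => ?_)
    rw [Fin.val_succ, harg, ← Fin.succ_castSucc, Fin.cons_succ, Fin.cons_succ]
  have hM : ∀ s : Fin (e + 1) → Fin N,
      (pathProd Am (Fin.cons i s : Fin (e + 1 + 1) → Fin N))ᵀ *
          pathProd Am (Fin.cons i s : Fin (e + 1 + 1) → Fin N)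
        = (Am i)ᵀ * ((pathProd Am s)ᵀ * pathProd Am s) * Am i := by
    intro s
    rw [pathProd_cons, Matrix.transpose_mul]
    simp only [Matrix.mul_assoc]
  have hL : Esum Am Pm ψ (e + 1) j i
      = ∑ s : Fin (e + 1) → Fin N,
          (Pm (ψ (j + 1)) i (s 0) *
              ∏ l : Fin e, Pm (ψ (j + 1 + (l : ℕ) + 1)) (s l.castSucc) (s l.succ)) •
            ((Am i)ᵀ * ((pathProd Am s)ᵀ * pathProd Am s) * Am i) := by
    unfold Esum
    rw [← Equiv.sum_comp (Fin.consEquiv fun _ : Fin (e + 1 + 1) => Fin N)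
      (fun t => (if t 0 = i then
          ∏ l : Fin (e + 1), Pm (ψ (j + (l : ℕ) + 1)) (t l.castSucc) (t l.succ)
        else 0) • ((pathProd Am t)ᵀ * pathProd Am t))]
    have hce : ∀ (x : Fin N) (s : Fin (e + 1) → Fin N),
        (Fin.consEquiv fun _ : Fin (e + 1 + 1) => Fin N) (x, s)
          = (Fin.cons x s : Fin (e + 1 + 1) → Fin N) := fun _ _ => rfl
    rw [Fintype.sum_prod_type, Finset.sum_comm]
    refine Finset.sum_congr rfl fun s _ => ?_
    simp only [hce]
    rw [Finset.sum_eq_single i (fun x _ hx => by simp [hx])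
      (fun h => absurd (Finset.mem_univ i) h)]
    show (if (Fin.cons i s : Fin (e + 1 + 1) → Fin N) 0 = i then _ else 0) •
      ((pathProd Am (Fin.cons i s : Fin (e + 1 + 1) → Fin N))ᵀ *
        pathProd Am (Fin.cons i s : Fin (e + 1 + 1) → Fin N)) = _
    rw [Fin.cons_zero, if_pos rfl, hW s, hM s]
  have hR : (∑ i', Pm (ψ (j + 1)) i i' • Esum Am Pm ψ e (j + 1) i')
      = ∑ s : Fin (e + 1) → Fin N,
          (Pm (ψ (j + 1)) i (s 0) *
              ∏ l : Fin e, Pm (ψ (j + 1 + (l : ℕ) + 1)) (s l.castSucc) (s l.succ)) •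
            ((pathProd Am s)ᵀ * pathProd Am s) := by
    unfold Esum
    simp only [Finset.smul_sum]
    rw [Finset.sum_comm]
    refine Finset.sum_congr rfl fun s _ => ?_
    simp only [smul_ite, smul_zero, smul_smul, mul_ite, mul_zero, ite_smul, zero_smul,
      Finset.sum_ite_eq, Finset.mem_univ, if_true]
  rw [hL, hR, Matrix.mul_sum, Matrix.sum_mul]
  refine Finset.sum_congr rfl fun s _ => ?_
  rw [mul_smul_comm, smul_mul_assoc]

lemma Esum_eq_grec (ψ : ℕ → Fin J)
    (hProw : ∀ (s : Fin J) (i : Fin N), ∑ j, Pm s i j = 1) :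
    ∀ (d j : ℕ) (i : Fin N), Esum Am Pm ψ d j i = Grec Am Pm ψ (d + 1) j i := by
  intro d
  induction d with
  | zero =>
    intro j i
    rw [Esum_zero]
    show _ = (Am i)ᵀ * (∑ i', Pm (ψ (j + 1)) i i' • Grec Am Pm ψ 0 (j + 1) i') * Am i
    have : ∑ i', Pm (ψ (j + 1)) i i' • Grec Am Pm ψ 0 (j + 1) i'
        = (1 : Matrix (Fin n) (Fin n) ℝ) := by
      show (∑ i', Pm (ψ (j + 1)) i i' • (1 : Matrix (Fin n) (Fin n) ℝ)) = 1
      rw [← Finset.sum_smul, hProw, one_smul]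
    rw [this, mul_one]
  | succ e ih =>
    intro j i
    rw [Esum_succ]
    show _ = (Am i)ᵀ * (∑ i', Pm (ψ (j + 1)) i i' • Grec Am Pm ψ (e + 1) (j + 1) i') * Am i
    simp only [← ih]

lemma Gmat_eq_grec (ψ : ℕ → Fin J)
    (hProw : ∀ (s : Fin J) (i : Fin N), ∑ j, Pm s i j = 1)
    (i : Fin N) {j k : ℕ} (h : j ≤ k) :
    Gmat Am Pm ψ i j k = Grec Am Pm ψ (k - j) j i := by
  rcases eq_or_lt_of_le h with rfl | hlt
  · rw [Gmat, if_pos le_rfl]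
    simp [Grec]
  · rw [Gmat_eq_Esum Am Pm ψ i hlt, Esum_eq_grec Am Pm ψ hProw]
    have hd : k - j - 1 + 1 = k - j := by omega
    rw [hd]

lemma Esum_congr (ψ ψ' : ℕ → Fin J) (d j j' : ℕ) (i : Fin N)
    (h : ∀ l : ℕ, l < d → ψ (j + l + 1) = ψ' (j' + l + 1)) :
    Esum Am Pm ψ d j i = Esum Am Pm ψ' d j' i := by
  unfold Esum
  refine Finset.sum_congr rfl fun t _ => ?_
  have hw : (∏ l : Fin d, Pm (ψ (j + (l : ℕ) + 1)) (t l.castSucc) (t l.succ))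
      = ∏ l : Fin d, Pm (ψ' (j' + (l : ℕ) + 1)) (t l.castSucc) (t l.succ) :=
    Finset.prod_congr rfl fun l _ => by rw [h l l.isLt]
  rw [hw]

end Comb

section Main

variable {n N J : ℕ} (Am : Fin N → Matrix (Fin n) (Fin n) ℝ)
  (Pm : Fin J → Matrix (Fin N) (Fin N) ℝ)

lemma Grec_psd (ψ : ℕ → Fin J) (hPnn : ∀ (s : Fin J) (i j : Fin N), 0 ≤ Pm s i j) :
    ∀ (d j : ℕ) (i : Fin N), (Grec Am Pm ψ d j i).PosSemidef := by
  intro d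
  induction d with
  | zero => intro j i; exact Matrix.PosSemidef.one
  | succ d ih =>
    intro j i
    show ((Am i)ᵀ * (∑ i', Pm (ψ (j + 1)) i i' • Grec Am Pm ψ d (j + 1) i') * Am i).PosSemidef
    exact psd_conj (psd_sum _ _ fun i' _ => psd_smul (ih (j + 1) i') (hPnn _ _ _)) (Am i)

lemma Ysum_grec (ψ : ℕ → Fin J)
    (hProw : ∀ (s : Fin J) (i : Fin N), ∑ j, Pm s i j = 1) (M : ℕ) (i : Fin N) (t : ℕ) :
    Ysum Am Pm ψ M i t = ∑ j ∈ Finset.range (M + 2), Grec Am Pm ψ j t i := by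
  unfold Ysum
  refine Finset.sum_congr rfl fun j _ => ?_
  rw [Gmat_eq_grec Am Pm ψ hProw i (by omega : t ≤ t + j),
    show t + j - t = j from by omega]

lemma Ysum_congr (ψ ψ' : ℕ → Fin J) (M t t' : ℕ) (i : Fin N)
    (hw : window ψ M t = window ψ' M t') :
    Ysum Am Pm ψ M i t = Ysum Am Pm ψ' M i t' := by
  unfold Ysum
  refine Finset.sum_congr rfl fun j hj => ?_
  have hjM : j < M + 2 := Finset.mem_range.mp hj
  rcases Nat.eq_zero_or_pos j with rfl | hjpos
  · rw [Gmat, if_pos (by omega : t + 0 ≤ t), Gmat, if_pos (by omega : t' + 0 ≤ t')]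
  · rw [Gmat_eq_Esum Am Pm ψ i (by omega : t < t + j),
      Gmat_eq_Esum Am Pm ψ' i (by omega : t' < t' + j),
      show t + j - t - 1 = j - 1 from by omega,
      show t' + j - t' - 1 = j - 1 from by omega]
    apply Esum_congr
    intro l hl
    have hlM : l < M := by omega
    have := congrFun hw ⟨l, hlM⟩
    simpa [window] using this

lemma Ysum_lyap (ψ : ℕ → Fin J)
    (hProw : ∀ (s : Fin J) (i : Fin N), ∑ j, Pm s i j = 1) (M : ℕ) (i : Fin N) (t : ℕ) :
    Ysum Am Pm ψ M i t -
        (Am i)ᵀ * (∑ j', Pm (ψ (t + 1)) i j' • Ysum Am Pm ψ M j' (t + 1)) * Am i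
      = 1 - Grec Am Pm ψ (M + 2) t i := by
  have hmid : (∑ j', Pm (ψ (t + 1)) i j' • Ysum Am Pm ψ M j' (t + 1))
      = ∑ d ∈ Finset.range (M + 2), ∑ j', Pm (ψ (t + 1)) i j' • Grec Am Pm ψ d (t + 1) j' := by
    simp only [Ysum_grec Am Pm ψ hProw, Finset.smul_sum]
    rw [Finset.sum_comm]
  rw [hmid, Matrix.mul_sum, Matrix.sum_mul, Ysum_grec Am Pm ψ hProw]
  have hterm : ∀ d, (Am i)ᵀ * (∑ j', Pm (ψ (t + 1)) i j' • Grec Am Pm ψ d (t + 1) j') * Am i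
      = Grec Am Pm ψ (d + 1) t i := fun d => rfl
  simp only [hterm]
  have htel := Finset.sum_range_succ (fun d => Grec Am Pm ψ d t i) (M + 2)
  have htel' := Finset.sum_range_succ' (fun d => Grec Am Pm ψ d t i) (M + 2)
  have hcomb : (∑ d ∈ Finset.range (M + 2), Grec Am Pm ψ d t i) + Grec Am Pm ψ (M + 2) t i
      = (∑ d ∈ Finset.range (M + 2), Grec Am Pm ψ (d + 1) t i) + Grec Am Pm ψ 0 t i :=
    htel.symm.trans htel'
  have h0 : Grec Am Pm ψ 0 t i = (1 : Matrix (Fin n) (Fin n) ℝ) := rfl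
  rw [h0] at hcomb
  rw [sub_eq_sub_iff_add_eq_add]
  exact hcomb.trans (add_comm _ _)

lemma window_castSucc (ψ : ℕ → Fin J) (M t : ℕ) :
    (fun l : Fin M => window ψ (M + 1) t l.castSucc) = window ψ M t :=
  funext fun l => by simp [window]

lemma window_succ' (ψ : ℕ → Fin J) (M t : ℕ) :
    (fun l : Fin M => window ψ (M + 1) t l.succ) = window ψ M (t + 1) := by
  funext l
  unfold window
  congr 1
  rw [Fin.val_succ]
  omega

lemma window_zero' (ψ : ℕ → Fin J) (M t : ℕ) : window ψ (M + 1) t 0 = ψ (t + 1) := by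
  simp [window]

lemma psd_trivial (hn : n = 0) (A : Matrix (Fin n) (Fin n) ℝ) : A.PosSemidef := by
  subst hn
  exact Matrix.PosSemidef.of_dotProduct_mulVec_nonneg (by ext i j; exact i.elim0) fun x => by simp [dotProduct]

end Main

section Fwd

variable {n N J : ℕ} (Am : Fin N → Matrix (Fin n) (Fin n) ℝ)
  (Pm : Fin J → Matrix (Fin N) (Fin N) ℝ)

lemma forward_dir (Ψ : Set (ℕ → Fin J))
    (hPnn : ∀ (s : Fin J) (i j : Fin N), 0 ≤ Pm s i j)
    (hProw : ∀ (s : Fin J) (i : Fin N), ∑ j, Pm s i j = 1)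
    (h : UEMSS Am Pm Ψ) :
    ∃ (M : ℕ) (X : Fin N → (Fin M → Fin J) → Matrix (Fin n) (Fin n) ℝ),
      (∀ (i : Fin N) (r : Fin M → Fin J), r ∈ windowSet Ψ M → (X i r).PosDef) ∧
      ∀ r ∈ windowSet Ψ (M + 1), ∀ i : Fin N,
        (X i (fun l => r l.castSucc) -
          (Am i)ᵀ * (∑ j, Pm (r 0) i j • X j (fun l => r l.succ)) * Am i).PosDef := by
  classical
  obtain ⟨c, lam, hc, hlam0, hlam1, hstab⟩ := h
  obtain ⟨M, hM⟩ : ∃ M : ℕ, c * lam ^ (M + 2) < 1 := by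
    obtain ⟨k, hk⟩ := exists_pow_lt_of_lt_one (show (0:ℝ) < 1 / c by positivity) hlam1
    refine ⟨k, ?_⟩
    have hle : lam ^ (k + 2) ≤ lam ^ k :=
      pow_le_pow_of_le_one hlam0 hlam1.le (by omega)
    have hcpos : (0:ℝ) < c := by linarith
    calc c * lam ^ (k + 2) ≤ c * lam ^ k := by nlinarith
      _ < c * (1 / c) := by nlinarith
      _ = 1 := by field_simp
  set X : Fin N → (Fin M → Fin J) → Matrix (Fin n) (Fin n) ℝ := fun i r =>
    if h : ∃ ψ ∈ Ψ, ∃ t : ℕ, r = window ψ M t then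
      Ysum Am Pm h.choose M i h.choose_spec.2.choose
    else 1 with hX
  have hXeq : ∀ (r : Fin M → Fin J) (hr : r ∈ windowSet Ψ M) (ψ : ℕ → Fin J) (t : ℕ),
      r = window ψ M t → ∀ i, X i r = Ysum Am Pm ψ M i t := by
    intro r hr ψ t hrw i
    have hr' : ∃ ψ' ∈ Ψ, ∃ t' : ℕ, r = window ψ' M t' := hr
    simp only [hX, dif_pos hr']
    exact Ysum_congr Am Pm _ ψ M _ t i
      ((hr'.choose_spec.2.choose_spec).symm.trans hrw)
  refine ⟨M, X, ?_, ?_⟩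
  · intro i r hr
    obtain ⟨ψ, hψ, t, hrw⟩ := hr
    rw [hXeq r ⟨ψ, hψ, t, hrw⟩ ψ t hrw i, Ysum_grec Am Pm ψ hProw,
      Finset.sum_range_succ']
    exact Matrix.PosDef.posSemidef_add
      (psd_sum _ _ fun d _ => Grec_psd Am Pm ψ hPnn _ _ _)
      (Matrix.PosDef.one)
  · intro r hr i
    obtain ⟨ψ, hψ, t, hrw⟩ := hr
    have hcast : (fun l : Fin M => r l.castSucc) = window ψ M t := by
      rw [hrw]; exact window_castSucc ψ M t
    have hsucc : (fun l : Fin M => r l.succ) = window ψ M (t + 1) := by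
      rw [hrw]; exact window_succ' ψ M t
    have hr0 : r 0 = ψ (t + 1) := by rw [hrw]; exact window_zero' ψ M t
    rw [hcast, hsucc, hr0, hXeq (window ψ M t) ⟨ψ, hψ, t, rfl⟩ ψ t rfl i]
    have hXs : ∀ j', X j' (window ψ M (t + 1)) = Ysum Am Pm ψ M j' (t + 1) :=
      fun j' => hXeq _ ⟨ψ, hψ, t + 1, rfl⟩ ψ (t + 1) rfl j'
    simp only [hXs]
    rw [Ysum_lyap Am Pm ψ hProw M i t]
    have hG := hstab ψ hψ i t (t + M + 2) (by omega)
    rw [Gmat_eq_grec Am Pm ψ hProw i (show t ≤ t + M + 2 by omega),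
      show t + M + 2 - t = M + 2 from by omega] at hG
    have hsplit : (1 : Matrix (Fin n) (Fin n) ℝ) - Grec Am Pm ψ (M + 2) t i
        = (1 - c * lam ^ (M + 2)) • (1 : Matrix (Fin n) (Fin n) ℝ) +
            ((c * lam ^ (M + 2)) • (1 : Matrix (Fin n) (Fin n) ℝ) -
              Grec Am Pm ψ (M + 2) t i) := by
      rw [sub_smul, one_smul]; abel
    rw [hsplit]
    exact (posDef_smul_one (by linarith)).add_posSemidef hG

end Fwd

section Bwd

variable {n N J : ℕ} (Am : Fin N → Matrix (Fin n) (Fin n) ℝ)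
  (Pm : Fin J → Matrix (Fin N) (Fin N) ℝ)

lemma backward_dir (Ψ : Set (ℕ → Fin J)) (hΨ : Ψ.Nonempty)
    (hPnn : ∀ (s : Fin J) (i j : Fin N), 0 ≤ Pm s i j)
    (hProw : ∀ (s : Fin J) (i : Fin N), ∑ j, Pm s i j = 1)
    (h : ∃ (M : ℕ) (X : Fin N → (Fin M → Fin J) → Matrix (Fin n) (Fin n) ℝ),
      (∀ (i : Fin N) (r : Fin M → Fin J), r ∈ windowSet Ψ M → (X i r).PosDef) ∧
      ∀ r ∈ windowSet Ψ (M + 1), ∀ i : Fin N,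
        (X i (fun l => r l.castSucc) -
          (Am i)ᵀ * (∑ j, Pm (r 0) i j • X j (fun l => r l.succ)) * Am i).PosDef) :
    UEMSS Am Pm Ψ := by
  classical
  obtain ⟨M, X, hXpd, hXly⟩ := h
  obtain ⟨ψ0, hψ0⟩ := hΨ
  rcases Nat.eq_zero_or_pos N with hN | hN
  · exact ⟨1, 0, le_rfl, le_rfl, zero_lt_one, fun ψ _ i =>
      absurd i.isLt (by omega)⟩
  haveI : Nonempty (Fin N) := ⟨⟨0, hN⟩⟩
  haveI : Nonempty (Fin J) := ⟨ψ0 0⟩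
  -- lower bound α for X on the window set
  have h1 : ∀ p : Fin N × (Fin M → Fin J), ∃ a : ℝ, 0 < a ∧
      (p.2 ∈ windowSet Ψ M → (X p.1 p.2 - a • 1).PosSemidef) := by
    intro p
    by_cases hmem : p.2 ∈ windowSet Ψ M
    · obtain ⟨a, ha, hpsd⟩ := posDef_exists_lower (hXpd p.1 p.2 hmem)
      exact ⟨a, ha, fun _ => hpsd⟩
    · exact ⟨1, one_pos, fun h' => absurd h' hmem⟩
  choose gl hglpos hglspec using h1
  set α : ℝ := Finset.univ.inf' Finset.univ_nonempty gl with hαdef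
  have hαpos : 0 < α := (Finset.lt_inf'_iff _).mpr fun p _ => hglpos p
  have hαle : ∀ (i : Fin N) (r : Fin M → Fin J), r ∈ windowSet Ψ M →
      (X i r - α • 1).PosSemidef := by
    intro i r hr
    have heq : X i r - α • (1 : Matrix (Fin n) (Fin n) ℝ)
        = (X i r - gl (i, r) • 1) + (gl (i, r) - α) • 1 := by
      rw [sub_smul]; abel
    rw [heq]
    exact (hglspec (i, r) hr).add
      (psd_smul Matrix.PosSemidef.one
        (sub_nonneg.mpr (Finset.inf'_le _ (Finset.mem_univ _))))
  -- upper bound β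
  have h2 : ∀ p : Fin N × (Fin M → Fin J), ∃ b : ℝ, 0 ≤ b ∧
      (p.2 ∈ windowSet Ψ M → (b • 1 - X p.1 p.2).PosSemidef) := by
    intro p
    by_cases hmem : p.2 ∈ windowSet Ψ M
    · obtain ⟨b, hb, hpsd⟩ := exists_psd_upper (X p.1 p.2) (hXpd p.1 p.2 hmem).1
      exact ⟨b, hb, fun _ => hpsd⟩
    · exact ⟨0, le_rfl, fun h' => absurd h' hmem⟩
  choose gu hgu0 hguspec using h2
  set β : ℝ := max 1 (Finset.univ.sup' Finset.univ_nonempty gu) with hβdef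
  have hβ1 : (1:ℝ) ≤ β := le_max_left _ _
  have hβpos : (0:ℝ) < β := by linarith
  have hβle : ∀ (i : Fin N) (r : Fin M → Fin J), r ∈ windowSet Ψ M →
      (β • 1 - X i r).PosSemidef := by
    intro i r hr
    have heq : β • (1 : Matrix (Fin n) (Fin n) ℝ) - X i r
        = (gu (i, r) • 1 - X i r) + (β - gu (i, r)) • 1 := by
      rw [sub_smul]; abel
    have hge : gu (i, r) ≤ β :=
      le_trans (Finset.le_sup' _ (Finset.mem_univ _)) (le_max_right _ _)
    rw [heq]
    exact (hguspec (i, r) hr).add (psd_smul Matrix.PosSemidef.one (sub_nonneg.mpr hge))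
  -- strict decrease constant δ
  have h3 : ∀ p : Fin N × (Fin (M + 1) → Fin J), ∃ d : ℝ, 0 < d ∧
      (p.2 ∈ windowSet Ψ (M + 1) →
        ((X p.1 (fun l => p.2 l.castSucc) -
          (Am p.1)ᵀ * (∑ j, Pm (p.2 0) p.1 j • X j (fun l => p.2 l.succ)) * Am p.1)
            - d • 1).PosSemidef) := by
    intro p
    by_cases hmem : p.2 ∈ windowSet Ψ (M + 1)
    · obtain ⟨d, hd, hpsd⟩ := posDef_exists_lower (hXly p.2 hmem p.1)
      exact ⟨d, hd, fun _ => hpsd⟩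
    · exact ⟨1, one_pos, fun h' => absurd h' hmem⟩
  choose gd hgdpos hgdspec using h3
  set δ : ℝ := Finset.univ.inf' Finset.univ_nonempty gd with hδdef
  have hδpos : 0 < δ := (Finset.lt_inf'_iff _).mpr fun p _ => hgdpos p
  have hδle : ∀ (i : Fin N) (r : Fin (M + 1) → Fin J), r ∈ windowSet Ψ (M + 1) →
      ((X i (fun l => r l.castSucc) -
        (Am i)ᵀ * (∑ j, Pm (r 0) i j • X j (fun l => r l.succ)) * Am i)
          - δ • 1).PosSemidef := by
    intro i r hr
    have heq : (X i (fun l => r l.castSucc) -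
        (Am i)ᵀ * (∑ j, Pm (r 0) i j • X j (fun l => r l.succ)) * Am i) - δ • 1
      = ((X i (fun l => r l.castSucc) -
        (Am i)ᵀ * (∑ j, Pm (r 0) i j • X j (fun l => r l.succ)) * Am i) - gd (i, r) • 1)
          + (gd (i, r) - δ) • 1 := by
      rw [sub_smul]; abel
    rw [heq]
    exact (hgdspec (i, r) hr).add
      (psd_smul Matrix.PosSemidef.one
        (sub_nonneg.mpr (Finset.inf'_le _ (Finset.mem_univ _))))
  -- the contraction factor
  set lam : ℝ := max 0 (1 - δ / β) with hlamdef
  have hlam0 : (0:ℝ) ≤ lam := le_max_left _ _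
  have hlam1 : lam < 1 := by
    apply max_lt one_pos
    have : 0 < δ / β := div_pos hδpos hβpos
    linarith
  have hcontr : ∀ (ψ : ℕ → Fin J), ψ ∈ Ψ → ∀ (t : ℕ) (i : Fin N),
      (lam • X i (window ψ M t) -
        (Am i)ᵀ * (∑ j', Pm (ψ (t + 1)) i j' • X j' (window ψ M (t + 1))) * Am i).PosSemidef := by
    intro ψ hψ t i
    have hD := hδle i (window ψ (M + 1) t) ⟨ψ, hψ, t, rfl⟩
    rw [window_castSucc, window_succ', window_zero'] at hD
    have hXpsd : (X i (window ψ M t)).PosSemidef := (hXpd i _ ⟨ψ, hψ, t, rfl⟩).posSemidef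
    have hup : (β • 1 - X i (window ψ M t)).PosSemidef := hβle i _ ⟨ψ, hψ, t, rfl⟩
    have hc1 : ((δ / β) • (β • (1 : Matrix (Fin n) (Fin n) ℝ) -
        X i (window ψ M t))).PosSemidef := psd_smul hup (by positivity)
    have hc2 : ((lam - (1 - δ / β)) • X i (window ψ M t)).PosSemidef :=
      psd_smul hXpsd (by have := le_max_right (0:ℝ) (1 - δ / β); linarith)
    have hb : (δ / β) • (β • (1 : Matrix (Fin n) (Fin n) ℝ)) = δ • 1 := by
      rw [smul_smul, div_mul_cancel₀ _ (ne_of_gt hβpos)]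
    have heq : lam • X i (window ψ M t) -
        (Am i)ᵀ * (∑ j', Pm (ψ (t + 1)) i j' • X j' (window ψ M (t + 1))) * Am i
      = ((X i (window ψ M t) -
          (Am i)ᵀ * (∑ j', Pm (ψ (t + 1)) i j' • X j' (window ψ M (t + 1))) * Am i) - δ • 1)
        + (δ / β) • (β • 1 - X i (window ψ M t))
        + (lam - (1 - δ / β)) • X i (window ψ M t) := by
      rw [smul_sub, hb, sub_smul, sub_smul, one_smul]
      abel
    rw [heq]
    exact (hD.add hc1).add hc2
  -- main induction
  have hkey : ∀ (ψ : ℕ → Fin J), ψ ∈ Ψ → ∀ (d j : ℕ) (i : Fin N),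
      (lam ^ d • X i (window ψ M j) - α • Grec Am Pm ψ d j i).PosSemidef := by
    intro ψ hψ d
    induction d with
    | zero =>
      intro j i
      show (lam ^ 0 • X i (window ψ M j) - α • (1 : Matrix (Fin n) (Fin n) ℝ)).PosSemidef
      rw [pow_zero, one_smul]
      exact hαle i (window ψ M j) ⟨ψ, hψ, j, rfl⟩
    | succ d ih =>
      intro j i
      have hsum : ((∑ i', Pm (ψ (j + 1)) i i' • (lam ^ d • X i' (window ψ M (j + 1)))) -
          (∑ i', Pm (ψ (j + 1)) i i' • (α • Grec Am Pm ψ d (j + 1) i'))).PosSemidef := by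
        rw [← Finset.sum_sub_distrib]
        refine psd_sum _ _ fun i' _ => ?_
        rw [← smul_sub]
        exact psd_smul (ih (j + 1) i') (hPnn _ _ _)
      have hconj := psd_conj hsum (Am i)
      rw [Matrix.mul_sub, Matrix.sub_mul] at hconj
      have hS1 : (Am i)ᵀ * (∑ i', Pm (ψ (j + 1)) i i' •
            (lam ^ d • X i' (window ψ M (j + 1)))) * Am i
          = lam ^ d • ((Am i)ᵀ * (∑ i', Pm (ψ (j + 1)) i i' •
              X i' (window ψ M (j + 1))) * Am i) := by
        rw [show (∑ i', Pm (ψ (j + 1)) i i' • (lam ^ d • X i' (window ψ M (j + 1))))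
            = lam ^ d • ∑ i', Pm (ψ (j + 1)) i i' • X i' (window ψ M (j + 1)) by
          rw [Finset.smul_sum]
          exact Finset.sum_congr rfl fun i' _ => smul_comm _ _ _]
        rw [mul_smul_comm, smul_mul_assoc]
      have hS2 : (Am i)ᵀ * (∑ i', Pm (ψ (j + 1)) i i' •
            (α • Grec Am Pm ψ d (j + 1) i')) * Am i
          = α • Grec Am Pm ψ (d + 1) j i := by
        rw [show (∑ i', Pm (ψ (j + 1)) i i' • (α • Grec Am Pm ψ d (j + 1) i'))
            = α • ∑ i', Pm (ψ (j + 1)) i i' • Grec Am Pm ψ d (j + 1) i' by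
          rw [Finset.smul_sum]
          exact Finset.sum_congr rfl fun i' _ => smul_comm _ _ _]
        rw [mul_smul_comm, smul_mul_assoc]
        rfl
      rw [hS1, hS2] at hconj
      have hc := psd_smul (hcontr ψ hψ j i) (pow_nonneg hlam0 d)
      rw [smul_sub, smul_smul, ← pow_succ] at hc
      have heq : lam ^ (d + 1) • X i (window ψ M j) - α • Grec Am Pm ψ (d + 1) j i
          = (lam ^ (d + 1) • X i (window ψ M j) -
              lam ^ d • ((Am i)ᵀ * (∑ i', Pm (ψ (j + 1)) i i' •
                X i' (window ψ M (j + 1))) * Am i))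
            + (lam ^ d • ((Am i)ᵀ * (∑ i', Pm (ψ (j + 1)) i i' •
                X i' (window ψ M (j + 1))) * Am i) -
              α • Grec Am Pm ψ (d + 1) j i) := by abel
      rw [heq]
      exact hc.add hconj
  -- conclusion
  refine ⟨max 1 (β / α), lam, le_max_left _ _, hlam0, hlam1, ?_⟩
  intro ψ hψ i j k hjk
  rw [Gmat_eq_grec Am Pm ψ hProw i hjk]
  set d := k - j with hd
  have hkd := hkey ψ hψ d j i
  have hub := psd_smul (hβle i (window ψ M j) ⟨ψ, hψ, j, rfl⟩) (pow_nonneg hlam0 d)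
  have heq1 : (lam ^ d • X i (window ψ M j) - α • Grec Am Pm ψ d j i) +
      lam ^ d • (β • (1 : Matrix (Fin n) (Fin n) ℝ) - X i (window ψ M j))
      = (lam ^ d * β) • 1 - α • Grec Am Pm ψ d j i := by
    rw [smul_sub, smul_smul]; abel
  have h4 : ((lam ^ d * β) • (1 : Matrix (Fin n) (Fin n) ℝ) -
      α • Grec Am Pm ψ d j i).PosSemidef := heq1 ▸ hkd.add hub
  have h5 := psd_smul h4 (le_of_lt (inv_pos.mpr hαpos))
  have heq2 : α⁻¹ • ((lam ^ d * β) • (1 : Matrix (Fin n) (Fin n) ℝ) -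
      α • Grec Am Pm ψ d j i) = (lam ^ d * β / α) • 1 - Grec Am Pm ψ d j i := by
    rw [smul_sub, smul_smul, smul_smul, inv_mul_cancel₀ (ne_of_gt hαpos), one_smul,
      ← div_eq_inv_mul]
  rw [heq2] at h5
  have h6 : 0 ≤ max 1 (β / α) * lam ^ d - lam ^ d * β / α := by
    have hmax := le_max_right 1 (β / α)
    have hpow := pow_nonneg hlam0 d
    have hdiv : lam ^ d * β / α = β / α * lam ^ d := by ring
    rw [hdiv]
    exact sub_nonneg.mpr (mul_le_mul_of_nonneg_right hmax hpow)
  have heq3 : (max 1 (β / α) * lam ^ d) • (1 : Matrix (Fin n) (Fin n) ℝ) -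
      Grec Am Pm ψ d j i
      = ((lam ^ d * β / α) • 1 - Grec Am Pm ψ d j i) +
          (max 1 (β / α) * lam ^ d - lam ^ d * β / α) • 1 := by
    rw [sub_smul]; abel
  rw [heq3]
  exact h5.add (psd_smul Matrix.PosSemidef.one h6)

end Bwd


/-- The switched Markov jump linear system `(𝒢,Π,Ψ)` is uniformly
exponentially mean square stable iff there exist `M ∈ ℕ₀` and a function `X` assigning to each
`(i, r) ∈ 𝒩 × Ψ_M` a symmetric positive definite matrix such that
`A(i)ᵀ (Σ_j π_{ij}(r₁) X(j, r₂…r_{M+1})) A(i) − X(i, r₁…r_M)` is negative definite for every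
`(r₁,…,r_{M+1}) ∈ Ψ_{M+1}` and every `i ∈ 𝒩`. -/
theorem statement0 (n N J : ℕ) (Am : Fin N → Matrix (Fin n) (Fin n) ℝ)
    (Pm : Fin J → Matrix (Fin N) (Fin N) ℝ) (Ψ : Set (ℕ → Fin J)) (hΨ : Ψ.Nonempty)
    (hPnn : ∀ (s : Fin J) (i j : Fin N), 0 ≤ Pm s i j)
    (hProw : ∀ (s : Fin J) (i : Fin N), ∑ j, Pm s i j = 1) :
    UEMSS Am Pm Ψ ↔
      ∃ (M : ℕ) (X : Fin N → (Fin M → Fin J) → Matrix (Fin n) (Fin n) ℝ),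
        (∀ (i : Fin N) (r : Fin M → Fin J), r ∈ windowSet Ψ M → (X i r).PosDef) ∧
        ∀ r ∈ windowSet Ψ (M + 1), ∀ i : Fin N,
          (X i (fun l => r l.castSucc) -
            (Am i)ᵀ * (∑ j, Pm (r 0) i j • X j (fun l => r l.succ)) * Am i).PosDef := by
  constructor
  · exact forward_dir Am Pm Ψ hPnn hProw
  · exact backward_dir Am Pm Ψ hΨ hPnn hProw

end SMJLS
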